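/- For every family F = {F_t}_{t>0} of complex numbers and every λ > 0, one has λ√(N_λ(F)) ≤ C ( S_2(F) + λ√(N_{λ/3}^d(F)) ) for an absolute constant C, where N_λ is the λ-jump function, N^d_λ is the dyadic λ-jump function restricted to times t of the form 2^j (j ∈ ℤ), and S_2(F) = (Σ_{j∈ℤ} V_{2,j}(F)²)^{1/2} is the short 2-variation, with V_{2,j}(F) the 2-variation of F over [2^j, 2^{j+1}]. -/

import Mathlib

open scoped ENNReal

/-- The `λ`-jump number of a family `F = {F_t : t > 0}`. -/
noncomputable def jumpNumber (F : ℝ → ℂ) (lam : ℝ) : ℝ≥0∞ :=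
  ⨆ (N : ℕ) (_ : ∃ s t : ℕ → ℝ, (∀ k < N, 0 < s k) ∧
      (∀ k < N, s k < t k) ∧ (∀ k, k + 1 < N → t k ≤ s (k + 1)) ∧
      (∀ k < N, lam < ‖F (t k) - F (s k)‖)), (N : ℝ≥0∞)

/-- The dyadic `λ`-jump number of `F`, with times restricted to powers `2^j`, `j ∈ ℤ`. -/
noncomputable def dyadicJumpNumber (F : ℝ → ℂ) (lam : ℝ) : ℝ≥0∞ :=
  ⨆ (N : ℕ) (_ : ∃ j k : ℕ → ℤ,
      (∀ l < N, j l < k l) ∧ (∀ l, l + 1 < N → k l ≤ j (l + 1)) ∧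
      (∀ l < N, lam < ‖F ((2 : ℝ) ^ (k l)) - F ((2 : ℝ) ^ (j l))‖)), (N : ℝ≥0∞)

/-- The `2`-variation of `F` over the dyadic block `[2^j, 2^{j+1}]`. -/
noncomputable def shortVariationBlock (F : ℝ → ℂ) (j : ℤ) : ℝ≥0∞ :=
  ⨆ (N : ℕ) (t : Fin (N + 1) → ℝ) (_ : StrictMono t)
    (_ : ∀ i, t i ∈ Set.Icc ((2 : ℝ) ^ j) ((2 : ℝ) ^ (j + 1))),
    (∑ i : Fin N, ENNReal.ofReal (‖F (t i.succ) - F (t i.castSucc)‖ ^ 2)) ^ (1 / (2 : ℝ))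

/-- The short `2`-variation `S₂(F) = (∑_{j∈ℤ} V_{2,j}(F)²)^{1/2}`. -/
noncomputable def shortVariation (F : ℝ → ℂ) : ℝ≥0∞ :=
  (∑' j : ℤ, (shortVariationBlock F j) ^ (2 : ℝ)) ^ (1 / (2 : ℝ))

section JumpProofAux


lemma chain_le {N : ℕ} {s t : ℕ → ℝ} (h2 : ∀ k < N, s k < t k)
    (h3 : ∀ k, k + 1 < N → t k ≤ s (k + 1)) :
    ∀ k l, k < l → l < N → t k ≤ s l := by
  intro k l hkl hlN
  induction l with
  | zero => omega
  | succ m ih =>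
    rcases Nat.lt_succ_iff_lt_or_eq.mp hkl with h | h
    · exact le_trans (ih h (by omega))
        (le_trans (le_of_lt (h2 m (by omega))) (h3 m hlN))
    · subst h; exact h3 k hlN

lemma strictMono_cons {n : ℕ} {t : Fin (n + 1) → ℝ} (ht : StrictMono t) {x : ℝ}
    (hx : x < t 0) : StrictMono (Fin.cons x t : Fin (n + 2) → ℝ) := by
  rw [Fin.strictMono_iff_lt_succ]
  intro i
  induction i using Fin.cases with
  | zero => simpa using hx
  | succ j =>
    rw [← Fin.succ_castSucc, Fin.cons_succ, Fin.cons_succ]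
    exact ht Fin.castSucc_lt_succ

lemma sum_increments_cons (F : ℝ → ℂ) {n : ℕ} (x : ℝ) (t : Fin (n + 1) → ℝ) :
    ∑ i : Fin (n + 1),
        ENNReal.ofReal (‖F ((Fin.cons x t : Fin (n + 2) → ℝ) i.succ) -
          F ((Fin.cons x t : Fin (n + 2) → ℝ) i.castSucc)‖ ^ 2) =
      ENNReal.ofReal (‖F (t 0) - F x‖ ^ 2) +
        ∑ i : Fin n, ENNReal.ofReal (‖F (t i.succ) - F (t i.castSucc)‖ ^ 2) := by
  rw [Fin.sum_univ_succ]
  have h0 : ENNReal.ofReal (‖F ((Fin.cons x t : Fin (n + 2) → ℝ) (Fin.succ 0)) -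
      F ((Fin.cons x t : Fin (n + 2) → ℝ) (Fin.castSucc 0))‖ ^ 2) =
      ENNReal.ofReal (‖F (t 0) - F x‖ ^ 2) := by
    rw [Fin.cons_succ, Fin.castSucc_zero, Fin.cons_zero]
  rw [h0]
  congr 1

lemma block_aux (F : ℝ → ℂ) (μ : ℝ) (hμ : 0 ≤ μ) (c d : ℝ) :
    ∀ (m : ℕ) (u v : ℕ → ℝ),
    (∀ i < m + 1, u i < v i) →
    (∀ i, i + 1 < m + 1 → v i ≤ u (i + 1)) →
    (∀ i < m + 1, u i ∈ Set.Icc c d ∧ v i ∈ Set.Icc c d) →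
    (∀ i < m + 1, μ < ‖F (v i) - F (u i)‖) →
    ∃ (n : ℕ) (t : Fin (n + 1) → ℝ), StrictMono t ∧ (∀ i, t i ∈ Set.Icc c d) ∧
      t 0 = u 0 ∧
      ENNReal.ofReal (μ ^ 2) * ((m + 1 : ℕ) : ℝ≥0∞) ≤
        ∑ i : Fin n, ENNReal.ofReal (‖F (t i.succ) - F (t i.castSucc)‖ ^ 2) := by
  intro m
  induction m with
  | zero =>
    intro u v h1 h2 h3 h4
    refine ⟨1, ![u 0, v 0], ?_, ?_, rfl, ?_⟩
    · rw [Fin.strictMono_iff_lt_succ]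
      intro i
      fin_cases i
      simpa using h1 0 (by omega)
    · intro i
      fin_cases i
      · simpa using (h3 0 (by omega)).1
      · simpa using (h3 0 (by omega)).2
    · rw [Fin.sum_univ_one]
      have : ENNReal.ofReal (μ ^ 2) ≤
          ENNReal.ofReal (‖F (v 0) - F (u 0)‖ ^ 2) :=
        ENNReal.ofReal_le_ofReal (pow_le_pow_left₀ hμ (h4 0 (by omega)).le 2)
      simpa using this
  | succ m ih =>
    intro u v h1 h2 h3 h4
    obtain ⟨n, t, ht, hmem, ht0, hsum⟩ := ih (fun i => u (i + 1)) (fun i => v (i + 1))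
      (fun i hi => h1 (i + 1) (by omega)) (fun i hi => h2 (i + 1) (by omega))
      (fun i hi => h3 (i + 1) (by omega)) (fun i hi => h4 (i + 1) (by omega))
    have hv0 : v 0 ≤ t 0 := by rw [ht0]; exact h2 0 (by omega)
    have hu0v0 : u 0 < v 0 := h1 0 (by omega)
    have hjump0 : ENNReal.ofReal (μ ^ 2) ≤ ENNReal.ofReal (‖F (v 0) - F (u 0)‖ ^ 2) :=
      ENNReal.ofReal_le_ofReal (pow_le_pow_left₀ hμ (h4 0 (by omega)).le 2)
    have hcast : ENNReal.ofReal (μ ^ 2) * ((m + 1 + 1 : ℕ) : ℝ≥0∞) =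
        ENNReal.ofReal (μ ^ 2) + ENNReal.ofReal (μ ^ 2) * ((m + 1 : ℕ) : ℝ≥0∞) := by
      push_cast
      ring
    rcases eq_or_lt_of_le hv0 with heq | hlt
    · refine ⟨n + 1, Fin.cons (u 0) t,
        strictMono_cons ht (by rw [← heq]; exact hu0v0), ?_, rfl, ?_⟩
      · intro i
        induction i using Fin.cases with
        | zero => simpa using (h3 0 (by omega)).1
        | succ j => simpa using hmem j
      · rw [sum_increments_cons F (u 0) t, hcast]
        refine add_le_add ?_ hsum
        rw [← heq]
        exact hjump0
    · refine ⟨n + 2, Fin.cons (u 0) (Fin.cons (v 0) t),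
        strictMono_cons (strictMono_cons ht (by simpa using hlt)) (by simpa using hu0v0),
        ?_, rfl, ?_⟩
      · intro i
        induction i using Fin.cases with
        | zero => simpa using (h3 0 (by omega)).1
        | succ j =>
          induction j using Fin.cases with
          | zero => simpa using (h3 0 (by omega)).2
          | succ l => simpa using hmem l
      · rw [sum_increments_cons F (u 0) (Fin.cons (v 0) t), hcast]
        refine add_le_add (by simpa using hjump0) ?_
        rw [sum_increments_cons F (v 0) t]
        exact le_add_self.trans (le_refl _) |>.trans (add_le_add zero_le hsum) |>.trans (le_refl _)


lemma block_count (F : ℝ → ℂ) (μ : ℝ) (hμ : 0 ≤ μ) (j : ℤ) (m : ℕ) (u v : ℕ → ℝ)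
    (h1 : ∀ i < m, u i < v i) (h2 : ∀ i, i + 1 < m → v i ≤ u (i + 1))
    (h3 : ∀ i < m, u i ∈ Set.Icc ((2:ℝ)^j) ((2:ℝ)^(j+1)) ∧
      v i ∈ Set.Icc ((2:ℝ)^j) ((2:ℝ)^(j+1)))
    (h4 : ∀ i < m, μ < ‖F (v i) - F (u i)‖) :
    ENNReal.ofReal (μ ^ 2) * (m : ℝ≥0∞) ≤ (shortVariationBlock F j) ^ (2 : ℝ) := by
  cases m with
  | zero => simp
  | succ m =>
    obtain ⟨n, t, ht, hmem, _, hsum⟩ :=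
      block_aux F μ hμ ((2:ℝ)^j) ((2:ℝ)^(j+1)) m u v h1 h2 h3 h4
    set S := ∑ i : Fin n, ENNReal.ofReal (‖F (t i.succ) - F (t i.castSucc)‖ ^ 2) with hS
    have hV : S ^ (1 / (2:ℝ)) ≤ shortVariationBlock F j :=
      le_iSup_of_le n (le_iSup_of_le t (le_iSup_of_le ht (le_iSup_of_le hmem le_rfl)))
    have hS2 : S = (S ^ (1 / (2:ℝ))) ^ (2:ℝ) := by
      rw [← ENNReal.rpow_mul]
      norm_num
    calc ENNReal.ofReal (μ ^ 2) * ((m + 1 : ℕ) : ℝ≥0∞) ≤ S := hsum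
      _ = (S ^ (1 / (2:ℝ))) ^ (2:ℝ) := hS2
      _ ≤ (shortVariationBlock F j) ^ (2:ℝ) := ENNReal.rpow_le_rpow hV (by norm_num)

lemma classify (F : ℝ → ℂ) (lam : ℝ) (hlam : 0 < lam) (sk tk : ℝ)
    (hs : 0 < sk) (hst : sk < tk) (hj : lam < ‖F tk - F sk‖) :
    (∃ (w : ℤ) (u' v' : ℝ), sk ≤ u' ∧ u' < v' ∧ v' ≤ tk ∧
        u' ∈ Set.Icc ((2:ℝ)^w) ((2:ℝ)^(w+1)) ∧ v' ∈ Set.Icc ((2:ℝ)^w) ((2:ℝ)^(w+1)) ∧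
        lam / 3 < ‖F v' - F u'‖) ∨
    (∃ p q : ℤ, p < q ∧ sk ≤ (2:ℝ)^p ∧ (2:ℝ)^q ≤ tk ∧
        lam / 3 < ‖F ((2:ℝ)^q) - F ((2:ℝ)^p)‖) := by
  have h2 : (1:ℝ) < 2 := one_lt_two
  obtain ⟨a, ha⟩ := exists_mem_Ioc_zpow hs h2
  obtain ⟨b, hb⟩ := exists_mem_Ico_zpow (hs.trans hst) h2
  obtain ⟨ha1, ha2⟩ := ha
  obtain ⟨hb1, hb2⟩ := hb
  have hμ : 0 < lam / 3 := by linarith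
  rcases le_or_gt b a with hba | hab
  · -- no dyadic point inside: single block a
    refine Or.inl ⟨a, sk, tk, le_rfl, hst, le_rfl, ⟨ha1.le, ha2⟩,
      ⟨le_trans ha1.le hst.le, ?_⟩, by linarith⟩
    exact le_trans hb2.le (zpow_le_zpow_right₀ h2.le (by omega))
  · -- a < b, so a + 1 ≤ b
    have hab1 : a + 1 ≤ b := by omega
    have h2ab : (2:ℝ)^(a+1) ≤ (2:ℝ)^b := zpow_le_zpow_right₀ h2.le hab1
    have htri : lam / 3 < ‖F tk - F ((2:ℝ)^b)‖ ∨
        lam / 3 < ‖F ((2:ℝ)^b) - F ((2:ℝ)^(a+1))‖ ∨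
        lam / 3 < ‖F ((2:ℝ)^(a+1)) - F sk‖ := by
      by_contra hcon
      push_neg at hcon
      obtain ⟨c1, c2, c3⟩ := hcon
      have hdec : F tk - F sk = (F tk - F ((2:ℝ)^b)) +
          ((F ((2:ℝ)^b) - F ((2:ℝ)^(a+1))) + (F ((2:ℝ)^(a+1)) - F sk)) := by ring
      have := norm_add_le (F tk - F ((2:ℝ)^b))
        ((F ((2:ℝ)^b) - F ((2:ℝ)^(a+1))) + (F ((2:ℝ)^(a+1)) - F sk))
      have h' := norm_add_le (F ((2:ℝ)^b) - F ((2:ℝ)^(a+1))) (F ((2:ℝ)^(a+1)) - F sk)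
      rw [← hdec] at this
      linarith
    rcases htri with hc | hc | hc
    · -- right end: block b
      have hlt : (2:ℝ)^b < tk := by
        rcases eq_or_lt_of_le hb1 with heq | h
        · rw [heq] at hc; simp at hc; linarith
        · exact h
      exact Or.inl ⟨b, (2:ℝ)^b, tk, le_trans ha2 h2ab, hlt, le_rfl,
        ⟨le_rfl, zpow_le_zpow_right₀ h2.le (by omega)⟩, ⟨hb1, hb2.le⟩, hc⟩
    · -- middle: dyadic
      have hne : a + 1 < b := by
        rcases eq_or_lt_of_le hab1 with heq | h
        · rw [heq] at hc; simp at hc; linarith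
        · exact h
      exact Or.inr ⟨a + 1, b, hne, ha2, hb1, hc⟩
    · -- left end: block a
      have hlt : sk < (2:ℝ)^(a+1) := by
        rcases eq_or_lt_of_le ha2 with heq | h
        · rw [← heq] at hc; simp at hc; linarith
        · exact h
      exact Or.inl ⟨a, sk, (2:ℝ)^(a+1), le_rfl, hlt, le_trans h2ab hb1,
        ⟨ha1.le, ha2⟩, ⟨zpow_le_zpow_right₀ h2.le (by omega), le_rfl⟩, hc⟩

lemma key (F : ℝ → ℂ) (lam : ℝ) (hlam : 0 < lam) (N : ℕ) (s t : ℕ → ℝ)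
    (h1 : ∀ k < N, 0 < s k) (h2 : ∀ k < N, s k < t k)
    (h3 : ∀ k, k + 1 < N → t k ≤ s (k + 1))
    (h4 : ∀ k < N, lam < ‖F (t k) - F (s k)‖) :
    (N : ℝ≥0∞) ≤
      (∑' j : ℤ, (shortVariationBlock F j) ^ (2:ℝ)) / ENNReal.ofReal ((lam / 3) ^ 2)
        + dyadicJumpNumber F (lam / 3) := by
  classical
  set μ := lam / 3 with hμdef
  have hμ : 0 < μ := by rw [hμdef]; linarith
  set P : ℕ → Prop := fun k => ∃ (w : ℤ) (u' v' : ℝ), s k ≤ u' ∧ u' < v' ∧ v' ≤ t k ∧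
      u' ∈ Set.Icc ((2:ℝ)^w) ((2:ℝ)^(w+1)) ∧ v' ∈ Set.Icc ((2:ℝ)^w) ((2:ℝ)^(w+1)) ∧
      μ < ‖F v' - F u'‖ with hP
  set B : Finset ℕ := (Finset.range N).filter P with hBdef
  set D : Finset ℕ := (Finset.range N).filter (fun k => ¬ P k) with hDdef
  have hcards : B.card + D.card = N := by
    rw [hBdef, hDdef, Finset.card_filter_add_card_filter_not, Finset.card_range]
  -- choose block data
  have hBex : ∀ k, ∃ (w : ℤ) (u' v' : ℝ), k ∈ B → (s k ≤ u' ∧ u' < v' ∧ v' ≤ t k ∧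
      u' ∈ Set.Icc ((2:ℝ)^w) ((2:ℝ)^(w+1)) ∧ v' ∈ Set.Icc ((2:ℝ)^w) ((2:ℝ)^(w+1)) ∧
      μ < ‖F v' - F u'‖) := by
    intro k
    by_cases hk : k ∈ B
    · obtain ⟨w, u', v', h⟩ := (Finset.mem_filter.mp hk).2
      exact ⟨w, u', v', fun _ => h⟩
    · exact ⟨0, 0, 0, fun h => absurd h hk⟩
  choose w uu vv hBspec using hBex
  -- choose dyadic data
  have hDex : ∀ k, ∃ p q : ℤ, k ∈ D → (p < q ∧ s k ≤ (2:ℝ)^p ∧ (2:ℝ)^q ≤ t k ∧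
      μ < ‖F ((2:ℝ)^q) - F ((2:ℝ)^p)‖) := by
    intro k
    by_cases hk : k ∈ D
    · have hkN : k < N := Finset.mem_range.mp (Finset.mem_filter.mp hk).1
      have hnP : ¬ P k := (Finset.mem_filter.mp hk).2
      rcases classify F lam hlam (s k) (t k) (h1 k hkN) (h2 k hkN) (h4 k hkN) with hc | hc
      · exact absurd hc hnP
      · obtain ⟨p, q, h⟩ := hc
        exact ⟨p, q, fun _ => h⟩
    · exact ⟨0, 0, fun h => absurd h hk⟩
  choose pp qq hDspec using hDex
  have hchain := chain_le h2 h3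
  have hmemN : ∀ {k : ℕ}, k ∈ B → k < N := fun hk =>
    Finset.mem_range.mp (Finset.mem_filter.mp hk).1
  have hmemND : ∀ {k : ℕ}, k ∈ D → k < N := fun hk =>
    Finset.mem_range.mp (Finset.mem_filter.mp hk).1
  -- dyadic bound
  have hdyadic : (D.card : ℝ≥0∞) ≤ dyadicJumpNumber F μ := by
    set n₂ := D.card with hn2
    set e := D.orderEmbOfFin rfl with he
    set jf : ℕ → ℤ := fun l => if h : l < n₂ then pp (e ⟨l, h⟩) else 0 with hjf
    set kf : ℕ → ℤ := fun l => if h : l < n₂ then qq (e ⟨l, h⟩) else 1 with hkf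
    have hprop : ∃ j k : ℕ → ℤ,
        (∀ l < n₂, j l < k l) ∧ (∀ l, l + 1 < n₂ → k l ≤ j (l + 1)) ∧
        (∀ l < n₂, μ < ‖F ((2 : ℝ) ^ (k l)) - F ((2 : ℝ) ^ (j l))‖) := by
      refine ⟨jf, kf, ?_, ?_, ?_⟩
      · intro l hl
        have hmem := D.orderEmbOfFin_mem rfl ⟨l, hl⟩
        simp only [hjf, hkf, dif_pos hl]
        exact (hDspec _ hmem).1
      · intro l hl1
        have hl : l < n₂ := by omega
        have hm1 := D.orderEmbOfFin_mem rfl ⟨l, hl⟩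
        have hm2 := D.orderEmbOfFin_mem rfl ⟨l + 1, hl1⟩
        have hlt : e ⟨l, hl⟩ < e ⟨l + 1, hl1⟩ := by
          apply (D.orderEmbOfFin rfl).strictMono
          exact Fin.mk_lt_mk.mpr (by omega)
        have hzle : (2:ℝ) ^ (qq (e ⟨l, hl⟩)) ≤ (2:ℝ) ^ (pp (e ⟨l + 1, hl1⟩)) := by
          calc (2:ℝ) ^ (qq (e ⟨l, hl⟩)) ≤ t (e ⟨l, hl⟩) := (hDspec _ hm1).2.2.1
            _ ≤ s (e ⟨l + 1, hl1⟩) := hchain _ _ hlt (hmemND hm2)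
            _ ≤ (2:ℝ) ^ (pp (e ⟨l + 1, hl1⟩)) := (hDspec _ hm2).2.1
        have := (zpow_le_zpow_iff_right₀ (one_lt_two : (1:ℝ) < 2)).mp hzle
        simp only [hjf, hkf, dif_pos hl, dif_pos hl1]
        exact this
      · intro l hl
        have hmem := D.orderEmbOfFin_mem rfl ⟨l, hl⟩
        simp only [hjf, hkf, dif_pos hl]
        exact (hDspec _ hmem).2.2.2
    calc (n₂ : ℝ≥0∞) = ⨆ (_ : ∃ j k : ℕ → ℤ,
        (∀ l < n₂, j l < k l) ∧ (∀ l, l + 1 < n₂ → k l ≤ j (l + 1)) ∧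
        (∀ l < n₂, μ < ‖F ((2 : ℝ) ^ (k l)) - F ((2 : ℝ) ^ (j l))‖)), (n₂ : ℝ≥0∞) := by
          rw [iSup_pos hprop]
      _ ≤ dyadicJumpNumber F μ := le_iSup_of_le n₂ le_rfl
  -- block bound
  have hblock : ENNReal.ofReal (μ ^ 2) * (B.card : ℝ≥0∞) ≤
      ∑' j : ℤ, (shortVariationBlock F j) ^ (2:ℝ) := by
    have hfib : B.card = ∑ j ∈ B.image w, (B.filter (fun k => w k = j)).card :=
      Finset.card_eq_sum_card_fiberwise (fun x hx => Finset.mem_image_of_mem w hx)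
    have hfiber : ∀ j ∈ B.image w, ENNReal.ofReal (μ ^ 2) *
        ((B.filter (fun k => w k = j)).card : ℝ≥0∞) ≤ (shortVariationBlock F j) ^ (2:ℝ) := by
      intro j _
      set K := B.filter (fun k => w k = j) with hK
      set m := K.card with hm
      set eK := K.orderEmbOfFin rfl with heK
      have hKB : ∀ {x : ℕ}, x ∈ K → x ∈ B := fun hx => (Finset.mem_filter.mp hx).1
      have hKw : ∀ {x : ℕ}, x ∈ K → w x = j := fun hx => (Finset.mem_filter.mp hx).2
      refine block_count F μ hμ.le j m
        (fun i => if h : i < m then uu (eK ⟨i, h⟩) else 0)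
        (fun i => if h : i < m then vv (eK ⟨i, h⟩) else 0) ?_ ?_ ?_ ?_
      · intro i hi
        have hmem := K.orderEmbOfFin_mem rfl ⟨i, hi⟩
        simp only [dif_pos hi]
        exact (hBspec _ (hKB hmem)).2.1
      · intro i hi1
        have hi : i < m := by omega
        have hm1 := K.orderEmbOfFin_mem rfl ⟨i, hi⟩
        have hm2 := K.orderEmbOfFin_mem rfl ⟨i + 1, hi1⟩
        have hlt : eK ⟨i, hi⟩ < eK ⟨i + 1, hi1⟩ := by
          apply (K.orderEmbOfFin rfl).strictMono
          exact Fin.mk_lt_mk.mpr (by omega)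
        simp only [dif_pos hi, dif_pos hi1]
        calc vv (eK ⟨i, hi⟩) ≤ t (eK ⟨i, hi⟩) := (hBspec _ (hKB hm1)).2.2.1
          _ ≤ s (eK ⟨i + 1, hi1⟩) := hchain _ _ hlt (hmemN (hKB hm2))
          _ ≤ uu (eK ⟨i + 1, hi1⟩) := (hBspec _ (hKB hm2)).1
      · intro i hi
        have hmem := K.orderEmbOfFin_mem rfl ⟨i, hi⟩
        simp only [dif_pos hi]
        have hw := hKw hmem
        rw [← hw]
        exact ⟨(hBspec _ (hKB hmem)).2.2.2.1, (hBspec _ (hKB hmem)).2.2.2.2.1⟩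
      · intro i hi
        have hmem := K.orderEmbOfFin_mem rfl ⟨i, hi⟩
        simp only [dif_pos hi]
        exact (hBspec _ (hKB hmem)).2.2.2.2.2
    calc ENNReal.ofReal (μ ^ 2) * (B.card : ℝ≥0∞)
        = ∑ j ∈ B.image w, ENNReal.ofReal (μ ^ 2) *
            ((B.filter (fun k => w k = j)).card : ℝ≥0∞) := by
          rw [hfib]
          push_cast
          rw [Finset.mul_sum]
      _ ≤ ∑ j ∈ B.image w, (shortVariationBlock F j) ^ (2:ℝ) :=
          Finset.sum_le_sum hfiber
      _ ≤ ∑' j : ℤ, (shortVariationBlock F j) ^ (2:ℝ) := ENNReal.sum_le_tsum _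
  -- combine
  have hμ2 : ENNReal.ofReal (μ ^ 2) ≠ 0 := by
    simp only [ne_eq, ENNReal.ofReal_eq_zero, not_le]
    positivity
  have hB1 : (B.card : ℝ≥0∞) ≤
      (∑' j : ℤ, (shortVariationBlock F j) ^ (2:ℝ)) / ENNReal.ofReal (μ ^ 2) := by
    rw [ENNReal.le_div_iff_mul_le (Or.inl hμ2) (Or.inl ENNReal.ofReal_ne_top)]
    rw [mul_comm]
    exact hblock
  calc (N : ℝ≥0∞) = (B.card : ℝ≥0∞) + (D.card : ℝ≥0∞) := by
        rw [← hcards]; push_cast; ring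
    _ ≤ _ := add_le_add hB1 hdyadic

end JumpProofAux

/-- `λ √(N_λ(F)) ≤ C (S₂(F) + λ √(N^d_{λ/3}(F)))` for an absolute constant `C`. -/
theorem jump_le_short_add_dyadic :
    ∃ C : ℝ, 0 < C ∧ ∀ (F : ℝ → ℂ) (lam : ℝ), 0 < lam →
      ENNReal.ofReal lam * (jumpNumber F lam) ^ (1 / (2 : ℝ)) ≤
        ENNReal.ofReal C *
          (shortVariation F +
            ENNReal.ofReal lam * (dyadicJumpNumber F (lam / 3)) ^ (1 / (2 : ℝ))) := by
  refine ⟨3, by norm_num, ?_⟩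
  intro F lam hlam
  set μ : ℝ := lam / 3 with hμdef
  have hμ : 0 < μ := by rw [hμdef]; linarith
  set X := ∑' j : ℤ, (shortVariationBlock F j) ^ (2:ℝ) with hX
  set Y := dyadicJumpNumber F (lam / 3) with hY
  have hjump : jumpNumber F lam ≤ X / ENNReal.ofReal (μ ^ 2) + Y := by
    refine iSup_le fun N => iSup_le fun h => ?_
    obtain ⟨s, t, h1, h2, h3, h4⟩ := h
    exact key F lam hlam N s t h1 h2 h3 h4
  have h12 : (0:ℝ) ≤ 1 / 2 := by norm_num
  have hroot : (jumpNumber F lam) ^ (1 / (2:ℝ)) ≤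
      (X / ENNReal.ofReal (μ ^ 2)) ^ (1 / (2:ℝ)) + Y ^ (1 / (2:ℝ)) :=
    le_trans (ENNReal.rpow_le_rpow hjump h12)
      (ENNReal.rpow_add_le_add_rpow _ _ h12 (by norm_num))
  have hμne : ENNReal.ofReal μ ≠ 0 := by
    simp only [ne_eq, ENNReal.ofReal_eq_zero, not_le]; exact hμ
  have hofq : (ENNReal.ofReal (μ ^ 2)) ^ (1 / (2:ℝ)) = ENNReal.ofReal μ := by
    rw [ENNReal.ofReal_rpow_of_pos (by positivity)]
    congr 1
    rw [show (μ:ℝ) ^ 2 = μ ^ (2:ℝ) by rw [← Real.rpow_natCast μ 2]; norm_num,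
      ← Real.rpow_mul hμ.le]
    norm_num
  have hA : (X / ENNReal.ofReal (μ ^ 2)) ^ (1 / (2:ℝ)) =
      X ^ (1 / (2:ℝ)) * (ENNReal.ofReal μ)⁻¹ := by
    rw [div_eq_mul_inv, ENNReal.mul_rpow_of_nonneg _ _ h12, ENNReal.inv_rpow, hofq]
  have hS : X ^ (1 / (2:ℝ)) = shortVariation F := rfl
  have hlam3 : ENNReal.ofReal lam = ENNReal.ofReal 3 * ENNReal.ofReal μ := by
    rw [← ENNReal.ofReal_mul (by norm_num)]
    congr 1
    rw [hμdef]; ring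
  calc ENNReal.ofReal lam * (jumpNumber F lam) ^ (1 / (2:ℝ))
      ≤ ENNReal.ofReal lam * ((X ^ (1 / (2:ℝ)) * (ENNReal.ofReal μ)⁻¹) + Y ^ (1 / (2:ℝ))) := by
        rw [← hA]
        exact mul_le_mul_right hroot _
    _ = ENNReal.ofReal 3 * (ENNReal.ofReal μ * (ENNReal.ofReal μ)⁻¹) * X ^ (1 / (2:ℝ))
        + ENNReal.ofReal lam * Y ^ (1 / (2:ℝ)) := by
        rw [mul_add, hlam3]
        ring
    _ = ENNReal.ofReal 3 * X ^ (1 / (2:ℝ)) + ENNReal.ofReal lam * Y ^ (1 / (2:ℝ)) := by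
        rw [ENNReal.mul_inv_cancel hμne ENNReal.ofReal_ne_top, mul_one]
    _ ≤ ENNReal.ofReal 3 * X ^ (1 / (2:ℝ))
        + ENNReal.ofReal 3 * (ENNReal.ofReal lam * Y ^ (1 / (2:ℝ))) := by
        refine add_le_add le_rfl ?_
        conv_lhs => rw [← one_mul (ENNReal.ofReal lam * Y ^ (1 / (2:ℝ)))]
        refine mul_le_mul_left ?_ _
        exact ENNReal.one_le_ofReal.mpr (by norm_num)
    _ = ENNReal.ofReal 3 * (shortVariation F + ENNReal.ofReal lam * Y ^ (1 / (2:ℝ))) := by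
        rw [hS, mul_add]
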